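/- arXiv:math/0610620 — 3 statements merged into one kernel-verified Lean document; each statement's English description precedes it below -/
import Mathlib

section
/- Let $1 \le p < \infty$, $n \ge 1$, $t_j = j/(2n)$ for $j=0,\dots,2n-1$, and let $x_0, \dots, x_{n-1}$ be vectors in a normed space $E$. Define $f = \sum_{k=0}^{n-1} \mathbf{1}_{(t_{2k}, t_{2k+1}]} x_k$ and for $h \in \mathbb{R}$ let $(T(h)f)(t) = f(t+h)$. Then for every $t$ with $0 < t < (2n)^{-1}$ and every $h$ with $|h| \le t$ one has $\|T(h)f - f\|_{L^p(\mathbb{R};E)}^p \le 2t \sum_{k=0}^{n-1} \|x_k\|^p$. -/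
open MeasureTheory Set Finset

theorem stmt_1 (p : ℝ) (hp : 1 ≤ p) (n : ℕ) (hn : 1 ≤ n)
    (E : Type*) [NormedAddCommGroup E] (x : Fin n → E)
    (ts : ℕ → ℝ) (hts : ∀ j, ts j = j / (2 * n))
    (f : ℝ → E)
    (hf : ∀ s, f s = ∑ k : Fin n,
      Set.indicator (Set.Ioc (ts (2 * k)) (ts (2 * k + 1))) (fun _ => x k) s)
    (t h : ℝ) (ht0 : 0 < t) (ht1 : t < (2 * n : ℝ)⁻¹) (hh : |h| ≤ t) :
    (∫ s, ‖f (s + h) - f s‖ ^ p) ≤ 2 * t * ∑ k : Fin n, ‖x k‖ ^ p := by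
  classical
  have hn0 : (0:ℝ) < 2 * n := by
    have : (1:ℝ) ≤ n := by exact_mod_cast hn
    linarith
  have hL0 : 0 < (2 * (n:ℝ))⁻¹ := by positivity
  -- gap fact
  have hgap : ∀ j k : ℕ, j < k → ts (2*j+1) + (2 * (n:ℝ))⁻¹ ≤ ts (2*k) := by
    intro j k hjk
    rw [hts, hts, inv_eq_one_div, ← add_div]
    have h2 : ((2*j+1:ℕ):ℝ) + 1 ≤ ((2*k:ℕ):ℝ) := by
      have hjk' : (j:ℝ) + 1 ≤ k := by exact_mod_cast hjk
      push_cast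
      linarith
    exact (div_le_div_iff_of_pos_right hn0).mpr h2
  -- points in distinct intervals are far apart
  have hfar : ∀ (j k : Fin n) (u v : ℝ),
      u ∈ Set.Ioc (ts (2*(j:ℕ))) (ts (2*(j:ℕ)+1)) →
      v ∈ Set.Ioc (ts (2*(k:ℕ))) (ts (2*(k:ℕ)+1)) →
      j ≠ k → (2 * (n:ℝ))⁻¹ < |u - v| := by
    intro j k u v hu hv hjk
    rcases lt_or_gt_of_ne (fun hx : (j:ℕ) = (k:ℕ) => hjk (Fin.ext hx)) with hlt | hlt
    · have := hgap j k hlt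
      have h1 : (2 * (n:ℝ))⁻¹ < v - u := by
        have := hu.2
        have := hv.1
        linarith
      calc (2 * (n:ℝ))⁻¹ < v - u := h1
        _ ≤ |v - u| := le_abs_self _
        _ = |u - v| := abs_sub_comm _ _
    · have := hgap k j hlt
      have h1 : (2 * (n:ℝ))⁻¹ < u - v := by
        have := hv.2
        have := hu.1
        linarith
      calc (2 * (n:ℝ))⁻¹ < u - v := h1
        _ ≤ |u - v| := le_abs_self _
  -- value of f on an interval
  have hmem_unique : ∀ (j k : Fin n) (s : ℝ),
      s ∈ Set.Ioc (ts (2*(j:ℕ))) (ts (2*(j:ℕ)+1)) →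
      s ∈ Set.Ioc (ts (2*(k:ℕ))) (ts (2*(k:ℕ)+1)) → j = k := by
    intro j k s hj hk
    by_contra hne
    have := hfar j k s s hj hk hne
    rw [sub_self, abs_zero] at this
    linarith
  have hfval : ∀ (s : ℝ) (k : Fin n),
      s ∈ Set.Ioc (ts (2*(k:ℕ))) (ts (2*(k:ℕ)+1)) → f s = x k := by
    intro s k hk
    rw [hf]
    rw [Finset.sum_eq_single k]
    · exact Set.indicator_of_mem hk _
    · intro j _ hj
      exact Set.indicator_of_notMem (fun hs => hj (hmem_unique j k s hs hk)) _
    · intro hk'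
      exact absurd (Finset.mem_univ k) hk'
  have hfzero : ∀ s : ℝ, (∀ k : Fin n, s ∉ Set.Ioc (ts (2*(k:ℕ))) (ts (2*(k:ℕ)+1))) →
      f s = 0 := by
    intro s hs
    rw [hf]
    exact Finset.sum_eq_zero fun k _ => Set.indicator_of_notMem (hs k) _
  -- the exceptional sets
  set S : Fin n → Set ℝ := fun k =>
    Set.Ioc (min (ts (2*(k:ℕ))) (ts (2*(k:ℕ)) - h)) (max (ts (2*(k:ℕ))) (ts (2*(k:ℕ)) - h)) ∪
    Set.Ioc (min (ts (2*(k:ℕ)+1)) (ts (2*(k:ℕ)+1) - h))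
      (max (ts (2*(k:ℕ)+1)) (ts (2*(k:ℕ)+1) - h)) with hSdef
  set g : ℝ → ℝ := fun s => ∑ k : Fin n, (S k).indicator (fun _ => ‖x k‖ ^ p) s with hgdef
  have hind_nonneg : ∀ (k : Fin n) (s : ℝ), 0 ≤ (S k).indicator (fun _ => ‖x k‖ ^ p) s :=
    fun k s => Set.indicator_nonneg (fun _ _ => Real.rpow_nonneg (norm_nonneg _) p) s
  have hgnonneg : ∀ s, 0 ≤ g s := fun s => Finset.sum_nonneg fun k _ => hind_nonneg k s
  have hterm : ∀ (k : Fin n) (s : ℝ), s ∈ S k → ‖x k‖ ^ p ≤ g s := by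
    intro k s hs
    calc ‖x k‖ ^ p = (S k).indicator (fun _ => ‖x k‖ ^ p) s :=
          (Set.indicator_of_mem hs (fun _ => ‖x k‖ ^ p)).symm
      _ ≤ g s := Finset.single_le_sum (fun j _ => hind_nonneg j s) (Finset.mem_univ k)
  -- pointwise bound
  have hpt : ∀ s : ℝ, ‖f (s + h) - f s‖ ^ p ≤ g s := by
    intro s
    have hp0 : p ≠ 0 := by linarith
    by_cases hA1 : ∃ j : Fin n, s + h ∈ Set.Ioc (ts (2*(j:ℕ))) (ts (2*(j:ℕ)+1))
    · obtain ⟨j, hj⟩ := hA1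
      by_cases hB1 : ∃ k : Fin n, s ∈ Set.Ioc (ts (2*(k:ℕ))) (ts (2*(k:ℕ)+1))
      · obtain ⟨k, hk⟩ := hB1
        have hjk : j = k := by
          by_contra hne
          have hfar' := hfar j k (s+h) s hj hk hne
          have he : s + h - s = h := by ring
          rw [he] at hfar'
          linarith
        subst hjk
        rw [hfval _ j hj, hfval _ j hk, sub_self, norm_zero, Real.zero_rpow hp0]
        exact hgnonneg s
      · push_neg at hB1
        rw [hfval _ j hj, hfzero s hB1, sub_zero]
        apply hterm j s
        have hnotj := hB1 j
        rw [Set.mem_Ioc] at hnotj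
        push_neg at hnotj
        rcases le_or_gt s (ts (2*(j:ℕ))) with h1 | h1
        · exact Set.mem_union_left _ (Set.mem_Ioc.mpr
            ⟨lt_of_le_of_lt (min_le_right _ _) (by linarith [hj.1]),
             le_trans h1 (le_max_left _ _)⟩)
        · have h2 := hnotj h1
          exact Set.mem_union_right _ (Set.mem_Ioc.mpr
            ⟨lt_of_le_of_lt (min_le_left _ _) h2,
             le_trans (by linarith [hj.2]) (le_max_right _ _)⟩)
    · push_neg at hA1
      by_cases hB1 : ∃ k : Fin n, s ∈ Set.Ioc (ts (2*(k:ℕ))) (ts (2*(k:ℕ)+1))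
      · obtain ⟨k, hk⟩ := hB1
        rw [hfzero (s+h) hA1, hfval _ k hk, zero_sub, norm_neg]
        apply hterm k s
        have hnotk := hA1 k
        rw [Set.mem_Ioc] at hnotk
        push_neg at hnotk
        rcases le_or_gt (s + h) (ts (2*(k:ℕ))) with h1 | h1
        · exact Set.mem_union_left _ (Set.mem_Ioc.mpr
            ⟨lt_of_le_of_lt (min_le_left _ _) hk.1,
             le_trans (by linarith) (le_max_right _ _)⟩)
        · have h2 := hnotk h1
          exact Set.mem_union_right _ (Set.mem_Ioc.mpr
            ⟨lt_of_le_of_lt (min_le_right _ _) (by linarith),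
             le_trans hk.2 (le_max_left _ _)⟩)
      · push_neg at hB1
        rw [hfzero (s+h) hA1, hfzero s hB1, sub_self, norm_zero, Real.zero_rpow hp0]
        exact hgnonneg s
  -- measure of exceptional sets
  have hSmeas : ∀ k : Fin n, MeasurableSet (S k) :=
    fun k => measurableSet_Ioc.union measurableSet_Ioc
  have hSvol : ∀ k : Fin n, volume (S k) ≤ ENNReal.ofReal (2 * t) := by
    intro k
    refine le_trans (measure_union_le _ _) ?_
    rw [Real.volume_Ioc, Real.volume_Ioc]
    have e1 : max (ts (2*(k:ℕ))) (ts (2*(k:ℕ)) - h) - min (ts (2*(k:ℕ))) (ts (2*(k:ℕ)) - h)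
        = |h| := by rw [max_sub_min_eq_abs, abs_sub_comm, sub_sub_cancel]
    have e2 : max (ts (2*(k:ℕ)+1)) (ts (2*(k:ℕ)+1) - h)
        - min (ts (2*(k:ℕ)+1)) (ts (2*(k:ℕ)+1) - h) = |h| := by
      rw [max_sub_min_eq_abs, abs_sub_comm, sub_sub_cancel]
    rw [e1, e2, ← ENNReal.ofReal_add (abs_nonneg h) (abs_nonneg h)]
    exact ENNReal.ofReal_le_ofReal (by linarith)
  have hint : ∀ k : Fin n, Integrable ((S k).indicator (fun _ => ‖x k‖ ^ p)) := by
    intro k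
    rw [integrable_indicator_iff (hSmeas k)]
    refine (integrableOn_const_iff).mpr (Or.inr ?_)
    exact lt_of_le_of_lt (hSvol k) ENNReal.ofReal_lt_top
  have hgint : Integrable g := by
    rw [hgdef]
    exact integrable_finset_sum _ fun k _ => hint k
  have hmono : (∫ s, ‖f (s + h) - f s‖ ^ p) ≤ ∫ s, g s :=
    integral_mono_of_nonneg (Filter.Eventually.of_forall fun s =>
      Real.rpow_nonneg (norm_nonneg _) p) hgint (Filter.Eventually.of_forall hpt)
  refine le_trans hmono ?_
  have hgi : (∫ s, g s) = ∑ k : Fin n, (volume (S k)).toReal • ‖x k‖ ^ p := by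
    rw [hgdef]
    rw [integral_finset_sum _ fun k _ => hint k]
    exact Finset.sum_congr rfl fun k _ => integral_indicator_const _ (hSmeas k)
  rw [hgi]
  have hbd : ∀ k : Fin n, (volume (S k)).toReal • ‖x k‖ ^ p ≤ 2 * t * ‖x k‖ ^ p := by
    intro k
    rw [smul_eq_mul]
    apply mul_le_mul_of_nonneg_right _ (Real.rpow_nonneg (norm_nonneg _) p)
    calc (volume (S k)).toReal ≤ (ENNReal.ofReal (2 * t)).toReal :=
          ENNReal.toReal_mono ENNReal.ofReal_ne_top (hSvol k)
      _ = 2 * t := ENNReal.toReal_ofReal (by linarith)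
  calc (∑ k : Fin n, (volume (S k)).toReal • ‖x k‖ ^ p)
      ≤ ∑ k : Fin n, 2 * t * ‖x k‖ ^ p := Finset.sum_le_sum fun k _ => hbd k
    _ = 2 * t * ∑ k : Fin n, ‖x k‖ ^ p := by rw [Finset.mul_sum]
end

section
/- Let $r > 1$, $c = \sum_{i\ge 1} i^{-r}$, $t_0 = 0$, $t_k = c^{-1}\sum_{i=1}^k i^{-r}$, and let $0 < \alpha \le 1$. With $g_n$ as in the construction ($g_n(t) = (1 - \frac{|2t-t_k-t_{k-1}|}{t_k-t_{k-1}}) e_k$ on $(t_{k-1},t_k]$, $g_n = 0$ elsewhere), for all $s, t \in (t_{k-1}, t_k]$ with $1 \le k \le n$ one has $\|g_n(t) - g_n(s)\|_{\ell^p_n} \le \frac{2|t-s|^{\alpha}}{(t_n - t_{n-1})^{\alpha}}$. -/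
open Finset Set

theorem stmt_6 (r : ℝ) (hr : 1 < r)
    (c : ℝ) (hc : c = ∑' i : ℕ, ((i : ℝ) + 1) ^ (-r))
    (ts : ℕ → ℝ) (hts : ∀ k, ts k = c⁻¹ * ∑ i ∈ Finset.range k, ((i : ℝ) + 1) ^ (-r))
    (α : ℝ) (hα0 : 0 < α) (hα1 : α ≤ 1)
    (p : ℝ) (hp : 1 ≤ p) (n : ℕ) (hn : 1 ≤ n)
    (g : ℝ → Fin n → ℝ)
    (hg : ∀ t, g t = ∑ k : Fin n,
      Set.indicator (Set.Ioc (ts k) (ts (k + 1)))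
        (fun s => 1 - |2 * s - ts (k + 1) - ts k| / (ts (k + 1) - ts k)) t •
        (Pi.single k 1 : Fin n → ℝ)) :
    ∀ k : ℕ, 1 ≤ k → k ≤ n →
      ∀ s ∈ Set.Ioc (ts (k - 1)) (ts k), ∀ t ∈ Set.Ioc (ts (k - 1)) (ts k),
        (∑ j : Fin n, |g t j - g s j| ^ p) ^ (1 / p) ≤
          2 * |t - s| ^ α / (ts n - ts (n - 1)) ^ α := by
  have hp0 : (0:ℝ) < p := lt_of_lt_of_le one_pos hp
  have hsum : Summable (fun i : ℕ => ((i : ℝ) + 1) ^ (-r)) := by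
    have h0 : Summable (fun n : ℕ => ((n : ℝ)) ^ (-r)) :=
      Real.summable_nat_rpow.2 (by linarith)
    have h1 := (summable_nat_add_iff (f := fun n : ℕ => ((n : ℝ)) ^ (-r)) 1).2 h0
    simpa using h1
  have hc0 : 0 < c := by
    rw [hc]
    exact Summable.tsum_pos hsum (fun i => by positivity) 0 (by positivity)
  have hΔeq : ∀ m : ℕ, ts (m + 1) - ts m = c⁻¹ * ((m : ℝ) + 1) ^ (-r) := by
    intro m
    simp only [hts, Finset.sum_range_succ]
    ring
  have hΔpos : ∀ m : ℕ, 0 < ts (m + 1) - ts m := by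
    intro m; rw [hΔeq]; positivity
  have hts_mono : StrictMono ts :=
    strictMono_nat_of_lt_succ (fun m => by linarith [hΔpos m])
  have hΔanti : ∀ a b : ℕ, a ≤ b → ts (b + 1) - ts b ≤ ts (a + 1) - ts a := by
    intro a b hab
    rw [hΔeq, hΔeq]
    refine mul_le_mul_of_nonneg_left ?_ (by positivity)
    refine Real.rpow_le_rpow_of_nonpos (by positivity) ?_ (by linarith)
    have : (a : ℝ) ≤ (b : ℝ) := Nat.cast_le.2 hab
    linarith
  intro k hk1 hkn s hs t ht
  have hkk : k - 1 + 1 = k := Nat.succ_pred_eq_of_pos hk1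
  have hnn : n - 1 + 1 = n := Nat.succ_pred_eq_of_pos hn
  set d := ts k - ts (k - 1) with hd
  have hdpos : 0 < d := by
    have := hΔpos (k - 1); rwa [hkk] at this
  set D := ts n - ts (n - 1) with hD
  have hDpos : 0 < D := by
    have := hΔpos (n - 1); rwa [hnn] at this
  have hDd : D ≤ d := by
    have := hΔanti (k - 1) (n - 1) (by omega)
    rwa [hkk, hnn] at this
  set f : ℝ → ℝ := fun x => 1 - |2 * x - ts k - ts (k - 1)| / d with hf
  have hj : k - 1 < n := by omega
  set j : Fin n := ⟨k - 1, hj⟩ with hjdef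
  -- g evaluated on the interval
  have hgx : ∀ x ∈ Set.Ioc (ts (k - 1)) (ts k), ∀ j' : Fin n,
      g x j' = if j' = j then f x else 0 := by
    intro x hx j'
    have hgx' : g x j' = Set.indicator (Set.Ioc (ts j') (ts (j' + 1)))
        (fun s => 1 - |2 * s - ts (j' + 1) - ts j'| / (ts (j' + 1) - ts j')) x := by
      rw [hg]
      simp [Finset.sum_apply, Pi.single_apply]
    by_cases hjj : j' = j
    · subst hjj
      have hmem : x ∈ Set.Ioc (ts (j : ℕ)) (ts ((j : ℕ) + 1)) := by
        simpa [hjdef, hkk] using hx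
      rw [hgx', Set.indicator_of_mem hmem]
      simp [hf, hjdef, hkk, hd]
    · have hne : (j' : ℕ) ≠ k - 1 := fun h => hjj (Fin.ext h)
      have hnotmem : x ∉ Set.Ioc (ts (j' : ℕ)) (ts ((j' : ℕ) + 1)) := by
        rcases lt_or_gt_of_ne hne with h | h
        · -- j' + 1 ≤ k - 1, so ts (j'+1) ≤ ts (k-1) < x
          intro hmem
          have h1 : ts ((j' : ℕ) + 1) ≤ ts (k - 1) := hts_mono.monotone (by omega)
          exact absurd hmem.2 (not_le.2 (lt_of_le_of_lt h1 hx.1))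
        · -- k ≤ j', so x ≤ ts k ≤ ts j'
          intro hmem
          have h1 : ts k ≤ ts (j' : ℕ) := hts_mono.monotone (by omega)
          exact absurd hmem.1 (not_lt.2 (le_trans hx.2 h1))
      rw [hgx', Set.indicator_of_notMem hnotmem, if_neg hjj]
  -- reduce the sum
  have hsum_eq : ∑ j' : Fin n, |g t j' - g s j'| ^ p = |f t - f s| ^ p := by
    rw [Finset.sum_eq_single j]
    · rw [hgx t ht j, hgx s hs j, if_pos rfl, if_pos rfl]
    · intro b _ hb
      rw [hgx t ht b, hgx s hs b, if_neg hb, if_neg hb]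
      simp [Real.zero_rpow (ne_of_gt hp0)]
    · intro h; exact absurd (Finset.mem_univ j) h
  rw [hsum_eq, ← Real.rpow_mul (abs_nonneg _), mul_one_div_cancel (ne_of_gt hp0),
    Real.rpow_one]
  have hstep1 : |f t - f s| ≤ 2 * |t - s| / d := by
    have h1 : f t - f s =
        (|2 * s - ts k - ts (k - 1)| - |2 * t - ts k - ts (k - 1)|) / d := by
      simp only [hf]
      field_simp
      ring
    rw [h1, abs_div, abs_of_pos hdpos]
    gcongr
    calc |(|2 * s - ts k - ts (k - 1)| - |2 * t - ts k - ts (k - 1)|)|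
        ≤ |(2 * s - ts k - ts (k - 1)) - (2 * t - ts k - ts (k - 1))| :=
          abs_abs_sub_abs_le_abs_sub _ _
      _ = 2 * |t - s| := by
          rw [show (2 * s - ts k - ts (k - 1)) - (2 * t - ts k - ts (k - 1)) = 2 * (s - t) by ring,
            abs_mul, abs_sub_comm]
          norm_num
  have he : |t - s| ≤ d := by
    rw [abs_sub_le_iff]
    exact ⟨by linarith [ht.2, hs.1], by linarith [hs.2, ht.1]⟩
  have hstep2 : 2 * |t - s| / d ≤ 2 * |t - s| ^ α / D ^ α := by
    rcases eq_or_lt_of_le (abs_nonneg (t - s)) with he0 | he0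
    · rw [← he0, Real.zero_rpow (ne_of_gt hα0)]
      simp
    · have h1 : |t - s| / d ≤ (|t - s| / d) ^ α := by
        have hx1 : |t - s| / d ≤ 1 := (div_le_one hdpos).2 he
        have h := Real.rpow_le_rpow_of_exponent_ge (div_pos he0 hdpos) hx1 hα1
        rwa [Real.rpow_one] at h
      have h2 : (|t - s| / d) ^ α = |t - s| ^ α / d ^ α :=
        Real.div_rpow (le_of_lt he0) (le_of_lt hdpos) α
      have h3 : |t - s| ^ α / d ^ α ≤ |t - s| ^ α / D ^ α := by
        gcongr
      calc 2 * |t - s| / d = 2 * (|t - s| / d) := by ring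
        _ ≤ 2 * (|t - s| ^ α / D ^ α) := by
            have := le_trans h1 (le_of_eq h2)
            nlinarith [le_trans this h3]
        _ = 2 * |t - s| ^ α / D ^ α := by ring
  exact le_trans hstep1 hstep2
end

section
/- For the function $g_n$ defined by $g_n(t) = (1 - \frac{|2t-t_k-t_{k-1}|}{t_k-t_{k-1}}) e_k$ for $t \in (t_{k-1},t_k]$, $1\le k\le n$, and $g_n(t)=0$ otherwise (where $0 = t_0 < t_1 < \cdots < t_n \le 1$ with $t_k - t_{k-1}$ decreasing in $k$), and any $0 < \alpha \le 1$, $g_n$ is $\alpha$-Hölder continuous on $[0,1]$ with $\sup_{0 \le s < t \le 1} \frac{\|g_n(t)-g_n(s)\|_{\ell^p_n}}{|t-s|^{\alpha}} \le 4 (t_n - t_{n-1})^{-\alpha}$. -/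
open Finset Set

lemma ts_mono_aux (n : ℕ) (ts : ℕ → ℝ) (htsmono : ∀ k < n, ts k < ts (k + 1)) :
    ∀ a b : ℕ, a ≤ b → b ≤ n → ts a ≤ ts b := by
  intro a b hab hbn
  induction b with
  | zero => simp_all
  | succ m ih =>
    rcases Nat.lt_or_ge a (m+1) with h | h
    · have h1 : ts a ≤ ts m := ih (Nat.lt_succ_iff.mp h) (le_trans (Nat.le_succ m) hbn)
      exact h1.trans (le_of_lt (htsmono m (Nat.lt_of_succ_le hbn)))
    · have : a = m+1 := le_antisymm hab h
      simp [this]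

lemma tent_mem_aux (a b x : ℝ) (hab : a < b) :
    Set.indicator (Set.Ioc a b) (fun y => 1 - |2*y - b - a|/(b-a)) x ∈ Set.Icc (0:ℝ) 1 := by
  by_cases hx : x ∈ Set.Ioc a b
  · rw [Set.indicator_of_mem hx]
    obtain ⟨hx1, hx2⟩ := hx
    constructor
    · have h1 : |2*x - b - a| ≤ b - a := by
        rw [abs_le]; constructor <;> nlinarith
      have : |2*x - b - a|/(b-a) ≤ 1 := by
        rw [div_le_one (by linarith)]; exact h1
      linarith
    · have : 0 ≤ |2*x - b - a|/(b-a) := div_nonneg (abs_nonneg _) (by linarith)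
      linarith
  · rw [Set.indicator_of_notMem hx]; exact ⟨le_refl 0, zero_le_one⟩

lemma tent_lip_aux (a b s t : ℝ) (hab : a < b) (hst : s < t) :
    |Set.indicator (Set.Ioc a b) (fun y => 1 - |2*y - b - a|/(b-a)) t
     - Set.indicator (Set.Ioc a b) (fun y => 1 - |2*y - b - a|/(b-a)) s|
    ≤ 2/(b-a) * (t - s) := by
  have hba : (0:ℝ) < b - a := by linarith
  have hrw : 2/(b-a)*(t-s) = 2*(t-s)/(b-a) := by ring
  by_cases hs : s ∈ Set.Ioc a b <;> by_cases ht : t ∈ Set.Ioc a b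
  · rw [Set.indicator_of_mem hs, Set.indicator_of_mem ht]
    have heq : (1 - |2*t - b - a|/(b-a)) - (1 - |2*s - b - a|/(b-a))
         = (|2*s - b - a| - |2*t - b - a|)/(b-a) := by ring
    rw [heq, abs_div, abs_of_pos hba, div_le_iff₀ hba]
    calc |(|2*s-b-a| - |2*t-b-a|)| ≤ |(2*s-b-a) - (2*t-b-a)| := abs_abs_sub_abs_le_abs_sub _ _
      _ = 2*(t-s) := by
          rw [show (2*s-b-a)-(2*t-b-a) = -(2*(t-s)) by ring, abs_neg,
            abs_of_nonneg (by linarith)]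
      _ ≤ 2/(b-a)*(t-s)*(b-a) := by
          rw [hrw, div_mul_cancel₀ _ hba.ne']
  · have hbt : b < t := by
      by_contra h
      exact ht ⟨lt_trans hs.1 hst, le_of_not_gt h⟩
    rw [Set.indicator_of_mem hs, Set.indicator_of_notMem ht, zero_sub, abs_neg]
    have h6 : (0:ℝ) ≤ 1 - |2*s-b-a|/(b-a) := by
      have := (tent_mem_aux a b s hab).1
      rwa [Set.indicator_of_mem hs] at this
    rw [abs_of_nonneg h6, hrw, sub_le_iff_le_add, ← add_div, le_div_iff₀ hba, one_mul]
    linarith [le_abs_self (2*s-b-a)]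
  · have hsa : s ≤ a := by
      by_contra h
      exact hs ⟨lt_of_not_ge h, le_trans hst.le ht.2⟩
    rw [Set.indicator_of_mem ht, Set.indicator_of_notMem hs, sub_zero]
    have h6 : (0:ℝ) ≤ 1 - |2*t-b-a|/(b-a) := by
      have := (tent_mem_aux a b t hab).1
      rwa [Set.indicator_of_mem ht] at this
    rw [abs_of_nonneg h6, hrw, sub_le_iff_le_add, ← add_div, le_div_iff₀ hba, one_mul]
    linarith [neg_le_abs (2*t-b-a)]
  · rw [Set.indicator_of_notMem hs, Set.indicator_of_notMem ht]
    simp only [sub_zero, abs_zero]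
    exact mul_nonneg (by positivity) (by linarith)

theorem stmt_7 (n : ℕ) (hn : 1 ≤ n) (ts : ℕ → ℝ)
    (hts0 : ts 0 = 0) (htsmono : ∀ k < n, ts k < ts (k + 1)) (htsn : ts n ≤ 1)
    (htsdec : ∀ k : ℕ, 1 ≤ k → k ≤ n → ts n - ts (n - 1) ≤ ts k - ts (k - 1))
    (α : ℝ) (hα0 : 0 < α) (hα1 : α ≤ 1) (p : ℝ) (hp : 1 ≤ p)
    (g : ℝ → Fin n → ℝ)
    (hg : ∀ t, g t = ∑ k : Fin n,
      Set.indicator (Set.Ioc (ts k) (ts (k + 1)))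
        (fun s => 1 - |2 * s - ts (k + 1) - ts k| / (ts (k + 1) - ts k)) t •
        (Pi.single k 1 : Fin n → ℝ)) :
    ∀ s t : ℝ, 0 ≤ s → s < t → t ≤ 1 →
      (∑ j : Fin n, |g t j - g s j| ^ p) ^ (1 / p) ≤
        4 * (ts n - ts (n - 1)) ^ (-α) * (t - s) ^ α := by
  intro s t hs hst ht1
  have hp0 : (0:ℝ) < p := by linarith
  have hgj : ∀ x (j : Fin n), g x j =
      Set.indicator (Set.Ioc (ts j) (ts (j + 1)))
        (fun y => 1 - |2 * y - ts (j + 1) - ts j| / (ts (j + 1) - ts j)) x := by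
    intro x j
    rw [hg]
    simp [Finset.sum_apply, Pi.single_apply, mul_ite]
  -- rewrite to match aux lemma form (2*y vs 2 * y fine)
  have hδ : 0 < ts n - ts (n - 1) := by
    have h1 : n - 1 < n := Nat.sub_lt hn one_pos
    have := htsmono (n-1) h1
    rw [show n - 1 + 1 = n from by omega] at this
    linarith
  set δ := ts n - ts (n - 1) with hδdef
  have hts : 0 < t - s := by linarith
  set m := min 1 (2/δ * (t - s)) with hmdef
  have hm0 : 0 < m := lt_min one_pos (by positivity)
  -- per-coordinate bounds
  have hgap : ∀ j : Fin n, ts (j:ℕ) < ts ((j:ℕ) + 1) := fun j => htsmono j j.isLt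
  have hgapδ : ∀ j : Fin n, δ ≤ ts ((j:ℕ) + 1) - ts (j:ℕ) := by
    intro j
    have := htsdec ((j:ℕ)+1) (by omega) (by omega)
    simpa using this
  have hcoord : ∀ j : Fin n, |g t j - g s j| ≤ m := by
    intro j
    apply le_min
    · have h1 := tent_mem_aux (ts (j:ℕ)) (ts ((j:ℕ)+1)) t (hgap j)
      have h2 := tent_mem_aux (ts (j:ℕ)) (ts ((j:ℕ)+1)) s (hgap j)
      rw [← hgj t j] at h1
      rw [← hgj s j] at h2
      rw [abs_sub_le_iff]
      constructor <;> linarith [h1.1, h1.2, h2.1, h2.2]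
    · have h1 := tent_lip_aux (ts (j:ℕ)) (ts ((j:ℕ)+1)) s t (hgap j) hst
      rw [← hgj t j, ← hgj s j] at h1
      refine h1.trans ?_
      have h2 : 2/(ts ((j:ℕ)+1) - ts (j:ℕ)) ≤ 2/δ := by
        apply div_le_div_of_nonneg_left (by norm_num) hδ (hgapδ j)
      exact mul_le_mul_of_nonneg_right h2 hts.le
  -- at most two nonzero coordinates
  have hdisj : ∀ x : ℝ, ∀ j j' : Fin n, g x j ≠ 0 → g x j' ≠ 0 → j = j' := by
    intro x j j' hj hj'
    have hx : ∀ i : Fin n, g x i ≠ 0 → x ∈ Set.Ioc (ts (i:ℕ)) (ts ((i:ℕ)+1)) := by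
      intro i hi
      by_contra h
      rw [hgj x i, Set.indicator_of_notMem h] at hi
      exact hi rfl
    have h1 := hx j hj
    have h2 := hx j' hj'
    by_contra hne
    rcases lt_or_gt_of_ne (Fin.val_ne_of_ne hne) with h | h
    · have : ts ((j:ℕ)+1) ≤ ts (j':ℕ) := ts_mono_aux n ts htsmono _ _ (by omega) (by omega)
      linarith [h1.2, h2.1]
    · have : ts ((j':ℕ)+1) ≤ ts (j:ℕ) := ts_mono_aux n ts htsmono _ _ (by omega) (by omega)
      linarith [h1.1, h2.2]
  set S := Finset.univ.filter (fun j : Fin n => g t j - g s j ≠ 0) with hS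
  have hScard : S.card ≤ 2 := by
    have hsub : S ⊆ (Finset.univ.filter (fun j : Fin n => g s j ≠ 0)) ∪
        (Finset.univ.filter (fun j : Fin n => g t j ≠ 0)) := by
      intro j hj
      rw [hS, Finset.mem_filter] at hj
      rw [Finset.mem_union, Finset.mem_filter, Finset.mem_filter]
      by_contra h
      push_neg at h
      have h1 := h.1 (Finset.mem_univ j)
      have h2 := h.2 (Finset.mem_univ j)
      exact hj.2 (by rw [h1, h2, sub_zero])
    refine (Finset.card_le_card hsub).trans ((Finset.card_union_le _ _).trans ?_)
    have c1 : (Finset.univ.filter (fun j : Fin n => g s j ≠ 0)).card ≤ 1 := by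
      apply Finset.card_le_one.mpr
      intro a ha b hb
      rw [Finset.mem_filter] at ha hb
      exact hdisj s a b ha.2 hb.2
    have c2 : (Finset.univ.filter (fun j : Fin n => g t j ≠ 0)).card ≤ 1 := by
      apply Finset.card_le_one.mpr
      intro a ha b hb
      rw [Finset.mem_filter] at ha hb
      exact hdisj t a b ha.2 hb.2
    omega
  -- sum bound
  have hsum : (∑ j : Fin n, |g t j - g s j| ^ p) ≤ 2 * m ^ p := by
    have e1 : (∑ j : Fin n, |g t j - g s j| ^ p) = ∑ j ∈ S, |g t j - g s j| ^ p := by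
      rw [eq_comm]
      apply Finset.sum_subset (Finset.filter_subset _ _)
      intro j _ hj
      simp only [Finset.mem_filter, Finset.mem_univ, true_and, not_not] at hj
      rw [hj, abs_zero, Real.zero_rpow hp0.ne']
    rw [e1]
    calc ∑ j ∈ S, |g t j - g s j| ^ p ≤ ∑ _j ∈ S, m ^ p := by
          apply Finset.sum_le_sum
          intro j _
          exact Real.rpow_le_rpow (abs_nonneg _) (hcoord j) hp0.le
      _ = S.card * m ^ p := by rw [Finset.sum_const, nsmul_eq_mul]
      _ ≤ 2 * m ^ p := by
          apply mul_le_mul_of_nonneg_right _ (Real.rpow_nonneg hm0.le _)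
          exact_mod_cast hScard
  -- take rpow
  have hlhs : (∑ j : Fin n, |g t j - g s j| ^ p) ^ (1 / p) ≤ 2 * m := by
    have h1 : (∑ j : Fin n, |g t j - g s j| ^ p) ^ (1/p) ≤ (2 * m ^ p) ^ (1/p) := by
      apply Real.rpow_le_rpow _ hsum (by positivity)
      exact Finset.sum_nonneg fun j _ => Real.rpow_nonneg (abs_nonneg _) _
    refine h1.trans ?_
    rw [Real.mul_rpow (by norm_num) (Real.rpow_nonneg hm0.le _),
      ← Real.rpow_mul hm0.le, mul_one_div, div_self hp0.ne', Real.rpow_one]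
    apply mul_le_mul_of_nonneg_right _ hm0.le
    calc (2:ℝ) ^ (1/p) ≤ 2 ^ (1:ℝ) :=
          Real.rpow_le_rpow_of_exponent_le one_le_two ((div_le_one hp0).mpr hp)
      _ = 2 := Real.rpow_one 2
  -- final bound
  refine hlhs.trans ?_
  set x := (t - s)/δ with hxdef
  have hx : 0 < x := div_pos hts hδ
  have hkey : δ ^ (-α) * (t - s) ^ α = x ^ α := by
    rw [hxdef, Real.div_rpow hts.le hδ.le, Real.rpow_neg hδ.le, div_eq_mul_inv, mul_comm]
  have h2x : 2/δ * (t - s) = 2 * x := by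
    rw [hxdef]; ring
  rw [mul_assoc, hkey]
  by_cases hcase : 2/δ * (t - s) ≤ 1
  · have hmx : m = 2 * x := by rw [hmdef, min_eq_right hcase, h2x]
    have hx1 : x ≤ 1 := by
      rw [h2x] at hcase; linarith
    have : x ^ (1:ℝ) ≤ x ^ α := Real.rpow_le_rpow_of_exponent_ge hx hx1 hα1
    rw [Real.rpow_one] at this
    rw [hmx]
    linarith
  · push_neg at hcase
    rw [h2x] at hcase
    have hm1 : m ≤ 1 := min_le_left _ _
    have hhalf : (1/2 : ℝ) ≤ x := by linarith
    have h1 : (1/2 : ℝ) ^ (1:ℝ) ≤ (1/2 : ℝ) ^ α :=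
      Real.rpow_le_rpow_of_exponent_ge (by norm_num) (by norm_num) hα1
    rw [Real.rpow_one] at h1
    have h2 : (1/2 : ℝ) ^ α ≤ x ^ α := Real.rpow_le_rpow (by norm_num) hhalf hα0.le
    linarith
end
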